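/- arXiv:2208.01378 — 2 statements merged into one kernel-verified Lean document; each statement's English description precedes it below -/
import Mathlib

section
/- In the homogeneous two-compartment system with μ(t) = μ₀ e^{−t/τ} (μ₀, τ > 0), the intracellular concentration C_RE(t) converges as t → ∞ to C_RE(∞) = C_RE(0) + (C_E(0) − C_RE(0))·ε·(1 − exp(−μ₀τ/ε))·(stated explicitly: C_RE(t) = C_RE(0) + ε(C_E(0)−C_RE(0))(1 − exp(−(μ₀τ/ε)(1 − e^{−t/τ})))), and this limit is strictly less than the conserved mean ε C_E(0) + (1−ε) C_RE(0) when C_E(0) > C_RE(0). -/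
open Real Filter

private lemma const_of_deriv_zero {f : ℝ → ℝ} (hf : ∀ t : ℝ, 0 ≤ t → HasDerivAt f 0 t) :
    ∀ t : ℝ, 0 ≤ t → f t = f 0 := by
  intro t ht
  apply constant_of_has_deriv_right_zero (f := f) (a := 0) (b := t)
  · intro x hx
    exact (hf x hx.1).continuousAt.continuousWithinAt
  · intro x hx
    exact (hf x hx.1).hasDerivWithinAt
  · exact ⟨ht, le_rfl⟩

/-- With μ(t) = μ₀ e^{−t/τ}, the intracellular concentration has the stated closed form,
converges to C_RE(0) + ε(C_E(0) − C_RE(0))(1 − exp(−μ₀τ/ε)), and this limit is strictly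
below the conserved mean when C_E(0) > C_RE(0). -/
theorem stmt_10 (ε μ0 τ : ℝ) (hε : ε ∈ Set.Ioo (0 : ℝ) 1) (hμ0 : 0 < μ0) (hτ : 0 < τ)
    (CE CRE : ℝ → ℝ)
    (hCE : ∀ t : ℝ, 0 ≤ t →
      HasDerivAt CE (-((1 - ε) / ε) * (μ0 * Real.exp (-t / τ)) * (CE t - CRE t)) t)
    (hCRE : ∀ t : ℝ, 0 ≤ t →
      HasDerivAt CRE ((μ0 * Real.exp (-t / τ)) * (CE t - CRE t)) t) :
    (∀ t : ℝ, 0 ≤ t →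
      CRE t = CRE 0 + ε * (CE 0 - CRE 0) *
        (1 - Real.exp (-(μ0 * τ / ε) * (1 - Real.exp (-t / τ))))) ∧
    Filter.Tendsto CRE Filter.atTop
      (nhds (CRE 0 + ε * (CE 0 - CRE 0) * (1 - Real.exp (-(μ0 * τ / ε))))) ∧
    (CE 0 > CRE 0 →
      CRE 0 + ε * (CE 0 - CRE 0) * (1 - Real.exp (-(μ0 * τ / ε))) <
        ε * CE 0 + (1 - ε) * CRE 0) := by
  obtain ⟨hε0, hε1⟩ := hε
  have hεne : ε ≠ 0 := ne_of_gt hε0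
  have hτne : τ ≠ 0 := ne_of_gt hτ
  set D0 : ℝ := CE 0 - CRE 0 with hD0def
  set M : ℝ → ℝ := fun t => μ0 * τ * (1 - Real.exp (-t / τ)) with hMdef
  have hM0 : M 0 = 0 := by simp [hMdef]
  -- derivative of M
  have hM : ∀ t : ℝ, HasDerivAt M (μ0 * Real.exp (-t / τ)) t := by
    intro t
    have h1 : HasDerivAt (fun t : ℝ => -t / τ) (-1 / τ) t := by
      simpa using ((hasDerivAt_id t).neg.div_const τ)
    have h2 := h1.exp
    have h3 := ((hasDerivAt_const t (1 : ℝ)).sub h2).const_mul (μ0 * τ)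
    refine h3.congr_deriv ?_
    field_simp
    ring
  -- step 1: the difference decays
  have hDg : ∀ t : ℝ, 0 ≤ t →
      HasDerivAt (fun t => (CE t - CRE t) * Real.exp (M t / ε)) 0 t := by
    intro t ht
    have hD := (hCE t ht).sub (hCRE t ht)
    have hE : HasDerivAt (fun t => Real.exp (M t / ε))
        (Real.exp (M t / ε) * (μ0 * Real.exp (-t / τ) / ε)) t :=
      ((hM t).div_const ε).exp
    have := hD.mul hE
    refine this.congr_deriv ?_
    simp only [Pi.sub_apply]
    field_simp
    ring
  have hGconst := const_of_deriv_zero hDg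
  have hD : ∀ t : ℝ, 0 ≤ t → CE t - CRE t = D0 * Real.exp (-(M t) / ε) := by
    intro t ht
    have h := hGconst t ht
    simp only [hM0, zero_div, Real.exp_zero, mul_one] at h
    have hne : Real.exp (M t / ε) ≠ 0 := Real.exp_ne_zero _
    have : CE t - CRE t = D0 * (Real.exp (M t / ε))⁻¹ := by
      field_simp
      linarith [h]
    rw [this, ← Real.exp_neg, neg_div]
  -- step 2: closed form for CRE
  have hHg : ∀ t : ℝ, 0 ≤ t →
      HasDerivAt (fun t => CRE t + ε * D0 * Real.exp (-(M t) / ε)) 0 t := by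
    intro t ht
    have hE : HasDerivAt (fun t => Real.exp (-(M t) / ε))
        (Real.exp (-(M t) / ε) * (-(μ0 * Real.exp (-t / τ)) / ε)) t :=
      (((hM t).neg).div_const ε).exp
    have := (hCRE t ht).add (hE.const_mul (ε * D0))
    rw [hD t ht] at this
    refine this.congr_deriv ?_
    field_simp
    ring
  have hHconst := const_of_deriv_zero hHg
  have hclosed : ∀ t : ℝ, 0 ≤ t →
      CRE t = CRE 0 + ε * D0 * (1 - Real.exp (-(M t) / ε)) := by
    intro t ht
    have h := hHconst t ht
    simp only [hM0, neg_zero, zero_div, Real.exp_zero, mul_one] at h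
    linarith [h]
  have hform : ∀ t : ℝ, -(M t) / ε = -(μ0 * τ / ε) * (1 - Real.exp (-t / τ)) := by
    intro t
    simp only [hMdef]
    field_simp
  refine ⟨?_, ?_, ?_⟩
  · intro t ht
    rw [hclosed t ht]
    rw [hform t]
  · -- limit2
    have hu : Tendsto (fun t : ℝ => Real.exp (-t / τ)) atTop (nhds 0) := by
      apply Real.tendsto_exp_atBot.comp
      have h1 : Tendsto (fun t : ℝ => t / τ) atTop atTop :=
        tendsto_id.atTop_div_const hτ
      have h2 : Tendsto (fun t : ℝ => -(t / τ)) atTop atBot :=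
        tendsto_neg_atTop_atBot.comp h1
      simpa [neg_div] using h2
    have hcont : Tendsto (fun x : ℝ =>
        CRE 0 + ε * D0 * (1 - Real.exp (-(μ0 * τ / ε) * (1 - x)))) (nhds 0)
        (nhds (CRE 0 + ε * D0 * (1 - Real.exp (-(μ0 * τ / ε) * (1 - 0))))) := by
      apply Continuous.tendsto
      fun_prop
    have := hcont.comp hu
    simp only [sub_zero, mul_one] at this
    apply this.congr'
    filter_upwards [eventually_ge_atTop (0 : ℝ)] with t ht
    simp only [Function.comp_apply]
    rw [hclosed t ht, hform t]
  · intro hgt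
    have hD0pos : 0 < D0 := by simp [hD0def]; linarith
    have hexp : 0 < Real.exp (-(μ0 * τ / ε)) := Real.exp_pos _
    nlinarith [mul_pos hε0 hD0pos, mul_pos (mul_pos hε0 hD0pos) hexp]
end

section
/- In the homogeneous two-compartment system with nonnegative continuous μ, if C_E(0) ≥ C_RE(0) ≥ 0 then C_RE(t) is nondecreasing, C_E(t) is nonincreasing, and C_RE(t) ≤ C_E(t) for all t ≥ 0. -/
open Set Real MeasureTheory intervalIntegral

/-- If C_E(0) ≥ C_RE(0) ≥ 0, then C_RE is nondecreasing, C_E is nonincreasing, and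
C_RE(t) ≤ C_E(t) for all t ≥ 0. -/
theorem stmt_11 (ε : ℝ) (hε : ε ∈ Set.Ioo (0 : ℝ) 1)
    (μ CE CRE : ℝ → ℝ) (hμc : ContinuousOn μ (Set.Ici 0))
    (hμ0 : ∀ t : ℝ, 0 ≤ t → 0 ≤ μ t)
    (hCE : ∀ t : ℝ, 0 ≤ t →
      HasDerivAt CE (-((1 - ε) / ε) * μ t * (CE t - CRE t)) t)
    (hCRE : ∀ t : ℝ, 0 ≤ t → HasDerivAt CRE (μ t * (CE t - CRE t)) t)
    (h0 : CRE 0 ≤ CE 0) (h0' : 0 ≤ CRE 0) :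
    MonotoneOn CRE (Set.Ici 0) ∧ AntitoneOn CE (Set.Ici 0) ∧
      ∀ t : ℝ, 0 ≤ t → CRE t ≤ CE t := by
  obtain ⟨hε0, hε1⟩ := hε
  set D : ℝ → ℝ := fun t => CE t - CRE t with hDdef
  have hD : ∀ t : ℝ, 0 ≤ t → HasDerivAt D (-(1/ε) * μ t * D t) t := by
    intro t ht
    have h : HasDerivAt (fun x => CE x - CRE x) _ t := (hCE t ht).sub (hCRE t ht)
    convert h using 1
    simp only [hDdef]
    field_simp
    ring
  set J : ℝ → ℝ := fun t => ∫ s in (0:ℝ)..t, μ s with hJdef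
  have hint : ∀ t : ℝ, 0 ≤ t → IntervalIntegrable μ volume 0 t := by
    intro t ht
    apply (hμc.mono _).intervalIntegrable
    rw [uIcc_of_le ht]
    exact Icc_subset_Ici_self
  have hJd : ∀ t : ℝ, 0 ≤ t → HasDerivWithinAt J (μ t) (Ici t) t := by
    intro t ht
    exact integral_hasDerivWithinAt_right (s := Ici t) (t := Ioi t) (hint t ht)
      (AEStronglyMeasurable.stronglyMeasurableAtFilter_of_mem
        (hμc.aestronglyMeasurable measurableSet_Ici)
        (Filter.mem_of_superset self_mem_nhdsWithin
          (fun x hx => le_of_lt (lt_of_le_of_lt ht hx))))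
      ((hμc t ht).mono (fun x hx => le_of_lt (lt_of_le_of_lt ht hx)))
  set E : ℝ → ℝ := fun t => D t * Real.exp ((1/ε) * J t) with hEdef
  have hE : ∀ t : ℝ, 0 ≤ t → HasDerivWithinAt E 0 (Ici t) t := by
    intro t ht
    have h1 : HasDerivWithinAt (fun u => Real.exp ((1/ε) * J u))
        (Real.exp ((1/ε) * J t) * ((1/ε) * μ t)) (Ici t) t :=
      ((hJd t ht).const_mul (1/ε)).exp
    have h2 : HasDerivWithinAt (fun u => D u * Real.exp ((1/ε) * J u)) _ (Ici t) t :=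
      ((hD t ht).hasDerivWithinAt (s := Ici t)).mul h1
    convert h2 using 1
    field_simp
    ring
  -- key: D ≥ 0 on Ici 0
  have keyD : ∀ t : ℝ, 0 ≤ t → 0 ≤ D t := by
    intro t ht
    have hJc : ContinuousOn J (Icc 0 t) := by
      have := continuousOn_primitive_interval' (μ := volume) (hint t ht)
        (left_mem_uIcc)
      rwa [uIcc_of_le ht] at this
    have hEc : ContinuousOn E (Icc 0 t) := by
      apply ContinuousOn.mul
      · intro x hx
        exact ((hD x hx.1).continuousAt).continuousWithinAt
      · exact (Real.continuous_exp.comp_continuousOn (hJc.const_smul (1/ε)))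
    have hconst := constant_of_has_deriv_right_zero hEc
      (fun x hx => (hE x hx.1))
    have hEt : E t = E 0 := hconst t ⟨ht, le_rfl⟩
    have hJ0 : J 0 = 0 := by simp [hJdef]
    have hE0 : E 0 = D 0 := by simp [hEdef, hJ0]
    have hD0 : 0 ≤ D 0 := sub_nonneg.mpr h0
    have hexp : 0 < Real.exp ((1/ε) * J t) := Real.exp_pos _
    have : 0 ≤ E t := by rw [hEt, hE0]; exact hD0
    exact (mul_nonneg_iff_of_pos_right hexp).mp (by simpa [hEdef] using this)
  have hintIci : interior (Ici (0:ℝ)) = Ioi 0 := interior_Ici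
  refine ⟨?_, ?_, fun t ht => sub_nonneg.mp (keyD t ht)⟩
  · apply monotoneOn_of_deriv_nonneg (convex_Ici 0)
    · exact fun x hx => ((hCRE x hx).continuousAt).continuousWithinAt
    · intro x hx
      rw [hintIci] at hx
      exact ((hCRE x (le_of_lt hx)).differentiableAt).differentiableWithinAt
    · intro x hx
      rw [hintIci] at hx
      rw [(hCRE x (le_of_lt hx)).deriv]
      exact mul_nonneg (hμ0 x (le_of_lt hx)) (keyD x (le_of_lt hx))
  · apply antitoneOn_of_deriv_nonpos (convex_Ici 0)
    · exact fun x hx => ((hCE x hx).continuousAt).continuousWithinAt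
    · intro x hx
      rw [hintIci] at hx
      exact ((hCE x (le_of_lt hx)).differentiableAt).differentiableWithinAt
    · intro x hx
      rw [hintIci] at hx
      rw [(hCE x (le_of_lt hx)).deriv]
      have hc : 0 ≤ (1 - ε) / ε := div_nonneg (by linarith) (le_of_lt hε0)
      have := mul_nonneg (mul_nonneg hc (hμ0 x (le_of_lt hx))) (keyD x (le_of_lt hx))
      nlinarith [this]
end
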